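/- Let g : [a,b] → ℝ be twice continuously differentiable with |g''(x)| ≤ M for all x ∈ [a,b]. Then |∫_a^b g(x) dx − ((b−a)/2)(g(a)+g(b))| ≤ M(b−a)³/12. -/

import Mathlib

/-- Trapezoidal rule error bound: if `g ∈ C²([a,b])` with `|g''| ≤ M`, then
`|∫_a^b g − (b−a)/2 (g(a)+g(b))| ≤ M (b−a)³ / 12`. -/
theorem stmt9 (a b : ℝ) (hab : a < b) (M : ℝ) (hM : 0 ≤ M) (g g' g'' : ℝ → ℝ)
    (hg' : ∀ x ∈ Set.Icc a b, HasDerivAt g (g' x) x)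
    (hg'' : ∀ x ∈ Set.Icc a b, HasDerivAt g' (g'' x) x)
    (hcont : ContinuousOn g'' (Set.Icc a b))
    (hbound : ∀ x ∈ Set.Icc a b, |g'' x| ≤ M) :
    |(∫ x in a..b, g x) - (b - a) / 2 * (g a + g b)| ≤ M * (b - a) ^ 3 / 12 := by
  have hab' : a ≤ b := hab.le
  have huIcc : Set.uIcc a b = Set.Icc a b := Set.uIcc_of_le hab'
  set φ : ℝ → ℝ := fun x => (x - a) * (b - x) / 2 with hφ
  set φ' : ℝ → ℝ := fun x => (a + b - 2 * x) / 2 with hφ'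
  have hφd : ∀ x : ℝ, HasDerivAt φ (φ' x) x := by
    intro x
    have h : HasDerivAt (fun x => (x - a) * (b - x) / 2)
        ((1 * (b - x) + (x - a) * (0 - 1)) / 2) x :=
      (((hasDerivAt_id x).sub_const a).mul
        ((hasDerivAt_const x b).sub (hasDerivAt_id x))).div_const 2
    convert h using 1
    simp [hφ']; ring
  have hφ'd : ∀ x : ℝ, HasDerivAt φ' (-1 : ℝ) x := by
    intro x
    have h : HasDerivAt (fun x => (a + b - 2 * x) / 2)
        ((0 - 2 * 1) / 2) x :=
      (((hasDerivAt_const x (a + b)).sub ((hasDerivAt_id x).const_mul 2))).div_const 2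
    convert h using 1
    norm_num
  have hgc : ContinuousOn g (Set.Icc a b) := fun x hx => ((hg' x hx).continuousAt).continuousWithinAt
  have hg'c : ContinuousOn g' (Set.Icc a b) := fun x hx => ((hg'' x hx).continuousAt).continuousWithinAt
  have hφc : Continuous φ := by continuity
  have hφ'c : Continuous φ' := by continuity
  -- integrability
  have hint_φ'g' : IntervalIntegrable (fun x => φ' x * g' x) MeasureTheory.volume a b :=
    (ContinuousOn.mul (hφ'c.continuousOn) (huIcc ▸ hg'c)).intervalIntegrable
  have hint_g'' : IntervalIntegrable g'' MeasureTheory.volume a b :=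
    (huIcc ▸ hcont).intervalIntegrable
  have hint_g' : IntervalIntegrable g' MeasureTheory.volume a b :=
    (huIcc ▸ hg'c).intervalIntegrable
  have hint_g : IntervalIntegrable g MeasureTheory.volume a b :=
    (huIcc ▸ hgc).intervalIntegrable
  have hint_neg_g : IntervalIntegrable (fun x => (-1 : ℝ) * g x) MeasureTheory.volume a b := by
    exact hint_g.const_mul (-1)
  have hint_φ'' : IntervalIntegrable (fun _ : ℝ => (-1 : ℝ)) MeasureTheory.volume a b :=
    intervalIntegrable_const
  have hint_φ' : IntervalIntegrable φ' MeasureTheory.volume a b :=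
    hφ'c.intervalIntegrable a b
  -- IBP 1 : ∫ φ g'' = φ b * g' b - φ a * g' a - ∫ φ' g'
  have ibp1 : (∫ x in a..b, φ x * g'' x)
      = φ b * g' b - φ a * g' a - ∫ x in a..b, φ' x * g' x :=
    intervalIntegral.integral_mul_deriv_eq_deriv_mul
      (fun x _ => hφd x) (fun x hx => hg'' x (huIcc ▸ hx)) hint_φ' hint_g''
  -- IBP 2 : ∫ φ' g' = φ' b * g b - φ' a * g a - ∫ (-1) g
  have ibp2 : (∫ x in a..b, φ' x * g' x)
      = φ' b * g b - φ' a * g a - ∫ x in a..b, (-1 : ℝ) * g x :=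
    intervalIntegral.integral_mul_deriv_eq_deriv_mul
      (fun x _ => hφ'd x) (fun x hx => hg' x (huIcc ▸ hx)) hint_φ'' hint_g'
  have hval : (∫ x in a..b, (-1 : ℝ) * g x) = -∫ x in a..b, g x := by
    simp
  have hφa : φ a = 0 := by simp [hφ]
  have hφb : φ b = 0 := by simp [hφ]
  have hφ'a : φ' a = (b - a) / 2 := by simp [hφ']; ring
  have hφ'b : φ' b = (a - b) / 2 := by simp [hφ']; ring
  have key : (∫ x in a..b, g x) - (b - a) / 2 * (g a + g b)
      = -∫ x in a..b, φ x * g'' x := by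
    rw [ibp1, ibp2, hval, hφa, hφb, hφ'a, hφ'b]; ring
  rw [key, abs_neg]
  -- bound |∫ φ g''| ≤ ∫ M * φ
  have hMφ_int : IntervalIntegrable (fun x => M * φ x) MeasureTheory.volume a b :=
    (continuous_const.mul hφc).intervalIntegrable a b
  have habs_int : IntervalIntegrable (fun x => |φ x * g'' x|) MeasureTheory.volume a b :=
    ((ContinuousOn.mul hφc.continuousOn (huIcc ▸ hcont)).intervalIntegrable).abs
  have step1 : |∫ x in a..b, φ x * g'' x| ≤ ∫ x in a..b, |φ x * g'' x| :=
    intervalIntegral.abs_integral_le_integral_abs hab'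
  have step2 : (∫ x in a..b, |φ x * g'' x|) ≤ ∫ x in a..b, M * φ x := by
    apply intervalIntegral.integral_mono_on hab' habs_int hMφ_int
    intro x hx
    have hφnn : 0 ≤ φ x := by
      have h1 : a ≤ x := hx.1
      have h2 : x ≤ b := hx.2
      have : 0 ≤ (x - a) * (b - x) := mul_nonneg (by linarith) (by linarith)
      simp only [hφ]; linarith
    calc |φ x * g'' x| = φ x * |g'' x| := by
          rw [abs_mul, abs_of_nonneg hφnn]
      _ ≤ φ x * M := mul_le_mul_of_nonneg_left (hbound x hx) hφnn
      _ = M * φ x := mul_comm _ _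
  have step3 : (∫ x in a..b, M * φ x) = M * (b - a) ^ 3 / 12 := by
    have hF : ∀ x : ℝ, HasDerivAt
        (fun x => M / 2 * (-(x ^ 3) / 3 + (a + b) * x ^ 2 / 2 - a * b * x))
        (M * φ x) x := by
      intro x
      have h := (((hasDerivAt_pow 3 x).neg.div_const 3).add
          (((hasDerivAt_pow 2 x).const_mul (a + b)).div_const 2)).sub
          ((hasDerivAt_id x).const_mul (a * b))
      convert h.const_mul (M / 2) using 1
      · rfl
      · rfl
      · funext y; simp only [Pi.add_apply, Pi.sub_apply, Pi.neg_apply, id]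
      · show M * ((x - a) * (b - x) / 2) = _
        norm_num; ring
    rw [intervalIntegral.integral_eq_sub_of_hasDerivAt (fun x _ => hF x) hMφ_int]
    ring
  calc |∫ x in a..b, φ x * g'' x| ≤ ∫ x in a..b, |φ x * g'' x| := step1
    _ ≤ ∫ x in a..b, M * φ x := step2
    _ = M * (b - a) ^ 3 / 12 := step3
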